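/- Let c₁ ≥ 0 and c₂ > 0 be real numbers, and let (λ_n)_{n≥1} be a sequence of real numbers with 0 ≤ λ_n ≤ c₁·exp(−c₂·√n) for every n ≥ 1. Then for every integer N ≥ 1 the tail series ∑_{n=N+1}^∞ λ_n converges and ∑_{n=N+1}^∞ λ_n ≤ (2c₁/c₂²)·(1 + c₂·√N)·exp(−c₂·√N). -/

import Mathlib

noncomputable def Faux (c₁ c₂ x : ℝ) : ℝ :=
  -(2 * c₁ / c₂ ^ 2) * ((1 + c₂ * Real.sqrt x) * Real.exp (-c₂ * Real.sqrt x))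

lemma Faux_deriv (c₁ c₂ : ℝ) (hc₂ : 0 < c₂) {x : ℝ} (hx : 0 < x) :
    HasDerivAt (Faux c₁ c₂) (c₁ * Real.exp (-c₂ * Real.sqrt x)) x := by
  have hs : HasDerivAt Real.sqrt (1 / (2 * Real.sqrt x)) x := Real.hasDerivAt_sqrt hx.ne'
  have h1 : HasDerivAt (fun y => 1 + c₂ * Real.sqrt y) (c₂ * (1 / (2 * Real.sqrt x))) x :=
    (hs.const_mul c₂).const_add 1
  have h2 : HasDerivAt (fun y => Real.exp (-c₂ * Real.sqrt y))
      (Real.exp (-c₂ * Real.sqrt x) * (-c₂ * (1 / (2 * Real.sqrt x)))) x :=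
    (hs.const_mul (-c₂)).exp
  have h3 := (h1.mul h2).const_mul (-(2 * c₁ / c₂ ^ 2))
  refine h3.congr_deriv ?_
  have hsx : Real.sqrt x ≠ 0 := by positivity
  have hc2 : c₂ ≠ 0 := hc₂.ne'
  field_simp
  ring

lemma Faux_step (c₁ c₂ : ℝ) (hc₁ : 0 ≤ c₁) (hc₂ : 0 < c₂) {n : ℝ} (hn : 1 ≤ n) :
    c₁ * Real.exp (-c₂ * Real.sqrt (n + 1)) ≤ Faux c₁ c₂ (n + 1) - Faux c₁ c₂ n := by
  have hcont : Continuous (fun x : ℝ => c₁ * Real.exp (-c₂ * Real.sqrt x)) := by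
    continuity
  have hInt : ∫ x in n..(n + 1), c₁ * Real.exp (-c₂ * Real.sqrt x)
      = Faux c₁ c₂ (n + 1) - Faux c₁ c₂ n := by
    apply intervalIntegral.integral_eq_sub_of_hasDerivAt
    · intro x hx
      have hx0 : 0 < x := by
        have := hx.1
        rw [min_def] at this
        split_ifs at this <;> linarith
      exact Faux_deriv c₁ c₂ hc₂ hx0
    · exact hcont.intervalIntegrable _ _
  rw [← hInt]
  have hmono : ∫ x in n..(n + 1), c₁ * Real.exp (-c₂ * Real.sqrt (n + 1))
      ≤ ∫ x in n..(n + 1), c₁ * Real.exp (-c₂ * Real.sqrt x) := by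
    apply intervalIntegral.integral_mono_on (by linarith)
      (intervalIntegrable_const) (hcont.intervalIntegrable _ _)
    intro x hx
    have : Real.sqrt x ≤ Real.sqrt (n + 1) := Real.sqrt_le_sqrt hx.2
    have : -c₂ * Real.sqrt (n + 1) ≤ -c₂ * Real.sqrt x := by nlinarith
    exact mul_le_mul_of_nonneg_left (Real.exp_le_exp.mpr this) hc₁
  simpa using hmono

/-- Lemma 3.2(i) summation estimate: if `0 ≤ λ n ≤ c₁ exp (-c₂ √n)` for all `n ≥ 1`,
then for every `N ≥ 1` the tail series `∑_{n=N+1}^∞ λ n` converges and is bounded by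
`(2c₁/c₂²)(1 + c₂ √N) exp (-c₂ √N)`. -/
theorem stmt0 (c₁ c₂ : ℝ) (hc₁ : 0 ≤ c₁) (hc₂ : 0 < c₂) (lam : ℕ → ℝ)
    (hlam : ∀ n : ℕ, 1 ≤ n →
      0 ≤ lam n ∧ lam n ≤ c₁ * Real.exp (-c₂ * Real.sqrt n)) :
    ∀ N : ℕ, 1 ≤ N →
      Summable (fun n : ℕ => lam (n + (N + 1))) ∧
      ∑' n : ℕ, lam (n + (N + 1)) ≤
        (2 * c₁ / c₂ ^ 2) * (1 + c₂ * Real.sqrt N) * Real.exp (-c₂ * Real.sqrt N) := by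
  intro N hN
  set f : ℕ → ℝ := fun i => Faux c₁ c₂ ((i : ℝ) + (N : ℝ)) with hf
  have hterm : ∀ i : ℕ, lam (i + (N + 1)) ≤ f (i + 1) - f i := by
    intro i
    have h1 : (1 : ℕ) ≤ i + (N + 1) := by omega
    have h2 := (hlam _ h1).2
    have h3 := Faux_step c₁ c₂ hc₁ hc₂ (n := (i : ℝ) + (N : ℝ))
      (by have h : (1 : ℝ) ≤ (N : ℝ) := by exact_mod_cast hN
          have h' : (0 : ℝ) ≤ (i : ℝ) := Nat.cast_nonneg i
          linarith)
    have hcast : ((i + (N + 1) : ℕ) : ℝ) = (i : ℝ) + (N : ℝ) + 1 := by push_cast; ring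
    have hcast2 : ((i + 1 : ℕ) : ℝ) + (N : ℝ) = (i : ℝ) + (N : ℝ) + 1 := by push_cast; ring
    rw [hcast] at h2
    simp only [hf, hcast2]
    linarith
  have hFle : ∀ M : ℕ, f M ≤ 0 := by
    intro M
    have hx : (0 : ℝ) ≤ (M : ℝ) + (N : ℝ) := by positivity
    have : 0 ≤ (2 * c₁ / c₂ ^ 2) *
        ((1 + c₂ * Real.sqrt ((M : ℝ) + (N : ℝ))) *
          Real.exp (-c₂ * Real.sqrt ((M : ℝ) + (N : ℝ)))) := by positivity
    simp only [hf, Faux]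
    linarith
  have hpartial : ∀ M : ℕ, ∑ i ∈ Finset.range M, lam (i + (N + 1)) ≤ -(f 0) := by
    intro M
    calc ∑ i ∈ Finset.range M, lam (i + (N + 1))
        ≤ ∑ i ∈ Finset.range M, (f (i + 1) - f i) :=
          Finset.sum_le_sum (fun i _ => hterm i)
      _ = f M - f 0 := Finset.sum_range_sub f M
      _ ≤ -(f 0) := by linarith [hFle M]
  have hnn : ∀ i : ℕ, 0 ≤ lam (i + (N + 1)) := fun i => (hlam _ (by omega)).1
  have hB : -(f 0) = (2 * c₁ / c₂ ^ 2) * (1 + c₂ * Real.sqrt N) *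
      Real.exp (-c₂ * Real.sqrt N) := by
    simp only [hf, Faux, Nat.cast_zero, zero_add]
    ring
  have hsum : Summable (fun n : ℕ => lam (n + (N + 1))) :=
    summable_of_sum_range_le hnn hpartial
  refine ⟨hsum, ?_⟩
  rw [← hB]
  exact Summable.tsum_le_of_sum_range_le hsum hpartial
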